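/- Let k ≥ 2 and let N be a k-k-AND-BN with negation on n nodes. Then every control node set U satisfies |U| ≥ max over l = 1, 2, …, ⌊k/2⌋+1 of [ ((k−l)/(2k−l))·n + (1/(2k−l))·Σ_{j=1}^{l−2} j·|M_j| + ((l−1)/(2k−l))·Σ_{j=l−1}^{⌊k/2⌋} |M_j| ], where empty sums (sums whose lower index exceeds the upper index) are 0. -/

import Mathlib

namespace BN

variable {n : ℕ}

/-- The Boolean function `f` depends on input `j`. -/
def Depends (f : (Fin n → Bool) → Bool) (j : Fin n) : Prop :=
  ∃ x : Fin n → Bool, f (Function.update x j (!(x j))) ≠ f x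

/-- The set of incoming nodes of node `i` (Γ⁻). -/
def inSet (F : Fin n → (Fin n → Bool) → Bool) (i : Fin n) : Set (Fin n) :=
  {j | Depends (F i) j}

/-- The set of outgoing nodes of node `i` (Γ⁺). -/
def outSet (F : Fin n → (Fin n → Bool) → Bool) (i : Fin n) : Set (Fin n) :=
  {j | Depends (F j) i}

/-- The controlled trajectory: nodes in `U` get an xor-control signal. -/
def traj (F : Fin n → (Fin n → Bool) → Bool) (U : Finset (Fin n))
    (u : ℕ → Fin n → Bool) (x0 : Fin n → Bool) : ℕ → Fin n → Bool
  | 0 => x0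
  | t + 1 => fun i =>
      if i ∈ U then Bool.xor (u t i) (F i (traj F U u x0 t))
      else F i (traj F U u x0 t)

/-- `U` is a control node set: any initial state can be driven to any target state. -/
def IsControlSet (F : Fin n → (Fin n → Bool) → Bool) (U : Finset (Fin n)) : Prop :=
  ∀ x0 xT : Fin n → Bool, ∃ t : ℕ, 1 ≤ t ∧ ∃ u : ℕ → Fin n → Bool, traj F U u x0 t = xT

/-- A `k`-`k`-AND-BN with negation: node `i` is updated by the conjunction of literals
over the `k` distinct variables in `S i` with signs `sign i` (`true` = positive literal),
and every node occurs as an input to exactly `k` functions (outdegree `k`). -/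
structure AndNegBN (n k : ℕ) where
  S : Fin n → Finset (Fin n)
  sign : Fin n → Fin n → Bool
  card_S : ∀ i, (S i).card = k
  outdeg : ∀ j : Fin n, (Finset.univ.filter fun i => j ∈ S i).card = k

namespace AndNegBN

variable {k : ℕ}

/-- The update functions of the network. -/
def F (B : AndNegBN n k) : Fin n → (Fin n → Bool) → Bool :=
  fun i x => decide (∀ j ∈ B.S i, x j = B.sign i j)

/-- Number of occurrences of the positive literal `x i` among the update functions. -/
def posCount (B : AndNegBN n k) (i : Fin n) : ℕ :=
  (Finset.univ.filter fun l => i ∈ B.S l ∧ B.sign l i = true).card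

/-- Number of occurrences of the negative literal `¬ x i` among the update functions. -/
def negCount (B : AndNegBN n k) (i : Fin n) : ℕ :=
  (Finset.univ.filter fun l => i ∈ B.S l ∧ B.sign l i = false).card

/-- `M j`: the set of nodes `i` such that one of the literals `x i`, `¬ x i` appears
exactly `j` times and the other exactly `k - j` times. -/
def M (B : AndNegBN n k) (j : ℕ) : Finset (Fin n) :=
  Finset.univ.filter fun i =>
    (B.posCount i = j ∧ B.negCount i = k - j) ∨ (B.posCount i = k - j ∧ B.negCount i = j)

/-- The out-neighbors of node `i`: the nodes whose update function uses `i`. -/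
def outNbrs (B : AndNegBN n k) (i : Fin n) : Finset (Fin n) :=
  Finset.univ.filter fun l => i ∈ B.S l

end AndNegBN


section Aux
variable {n k : ℕ} (B : AndNegBN n k) (U : Finset (Fin n))

lemma F_eq_true_iff (i : Fin n) (z : Fin n → Bool) :
    B.F i z = true ↔ ∀ j ∈ B.S i, z j = B.sign i j := by
  simp [AndNegBN.F]

lemma surj (hU : IsControlSet B.F U) (v : Fin n → Bool) :
    ∃ z, ∀ i ∉ U, B.F i z = v i := by
  obtain ⟨t, ht, u, hu⟩ := hU v v
  obtain ⟨t', rfl⟩ : ∃ t', t = t' + 1 := ⟨t - 1, by omega⟩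
  refine ⟨traj B.F U u v t', fun i hi => ?_⟩
  have h := congrFun hu i
  simpa [traj, if_neg hi] using h

lemma sign_consistent (hU : IsControlSet B.F U) {i i' : Fin n} {j : Fin n}
    (hi : i ∉ U) (hi' : i' ∉ U) (hji : j ∈ B.S i) (hji' : j ∈ B.S i') :
    B.sign i j = B.sign i' j := by
  obtain ⟨z, hz⟩ := surj B U hU (fun _ => true)
  have h1 := (F_eq_true_iff B i z).1 (hz i hi)
  have h2 := (F_eq_true_iff B i' z).1 (hz i' hi')
  rw [← h1 j hji, h2 j hji']

lemma private_in (hU : IsControlSet B.F U) {i : Fin n} (hi : i ∉ U) :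
    ∃ j ∈ B.S i, ∀ i', i' ∉ U → j ∈ B.S i' → i' = i := by
  obtain ⟨z, hz⟩ := surj B U hU (fun i' => decide (i' ≠ i))
  have hFi : B.F i z = false := by simpa using hz i hi
  have hex : ∃ j ∈ B.S i, z j ≠ B.sign i j := by
    by_contra hc
    push_neg at hc
    have := (F_eq_true_iff B i z).2 hc
    rw [this] at hFi; simp at hFi
  obtain ⟨j, hjS, hjz⟩ := hex
  refine ⟨j, hjS, fun i' hi' hji' => by_contra fun hne => ?_⟩
  have hFi' : B.F i' z = true := by simpa [hne] using hz i' hi'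
  have hz' : z j = B.sign i' j := (F_eq_true_iff B i' z).1 hFi' j hji'
  exact hjz (hz'.trans (sign_consistent B U hU hi' hi hji' hjS))

lemma pos_add_neg (i : Fin n) : B.posCount i + B.negCount i = k := by
  classical
  have h := B.outdeg i
  rw [AndNegBN.posCount, AndNegBN.negCount, ← Finset.filter_filter, ← Finset.filter_filter]
  have h2 := Finset.card_filter_add_card_filter_not
    (s := Finset.univ.filter fun l => i ∈ B.S l) (p := fun l => B.sign l i = true)
  simpa [Bool.not_eq_true, h] using h2

lemma mem_M_iff_min {j : ℕ} (hj : j ≤ k / 2) (i : Fin n) :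
    i ∈ B.M j ↔ min (B.posCount i) (B.negCount i) = j := by
  have h := pos_add_neg B i
  simp only [AndNegBN.M, Finset.mem_filter, Finset.mem_univ, true_and]
  omega

lemma sum_M_le {l : ℕ} (hl1 : 1 ≤ l) (hl2 : l ≤ k / 2 + 1) :
    (∑ j ∈ Finset.Icc 1 (l - 2), j * (B.M j).card)
      + (l - 1) * (∑ j ∈ Finset.Icc (l - 1) (k / 2), (B.M j).card)
      ≤ ∑ i : Fin n, min (min (B.posCount i) (B.negCount i)) (l - 1) := by
  classical
  set g : Fin n → ℕ := fun i => min (min (B.posCount i) (B.negCount i)) (l - 1) with hg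
  set J1 := Finset.Icc 1 (l - 2) with hJ1
  set J2 := Finset.Icc (l - 1) (k / 2) with hJ2
  have hdisj : Disjoint J1 J2 := by
    rw [Finset.disjoint_left]
    intro j hj1 hj2
    rw [hJ1, Finset.mem_Icc] at hj1
    rw [hJ2, Finset.mem_Icc] at hj2
    omega
  have hgM : ∀ j, j ≤ k / 2 → ∀ i ∈ B.M j, g i = min j (l - 1) := by
    intro j hj i hi
    rw [mem_M_iff_min B hj] at hi
    rw [hg]; simp only []
    omega
  have h1 : ∀ j ∈ J1, j * (B.M j).card = ∑ i ∈ B.M j, g i := by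
    intro j hj
    rw [hJ1, Finset.mem_Icc] at hj
    have hjk : j ≤ k / 2 := by omega
    rw [Finset.sum_congr rfl (fun i hi => hgM j hjk i hi)]
    rw [Finset.sum_const, smul_eq_mul]
    have : min j (l - 1) = j := by omega
    rw [this, mul_comm]
  have h2 : ∀ j ∈ J2, (l - 1) * (B.M j).card = ∑ i ∈ B.M j, g i := by
    intro j hj
    rw [hJ2, Finset.mem_Icc] at hj
    have hjk : j ≤ k / 2 := hj.2
    rw [Finset.sum_congr rfl (fun i hi => hgM j hjk i hi)]
    rw [Finset.sum_const, smul_eq_mul]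
    have : min j (l - 1) = l - 1 := by omega
    rw [this, mul_comm]
  have hpair : (↑(J1 ∪ J2) : Set ℕ).PairwiseDisjoint B.M := by
    intro j hj j' hj' hne
    have hjk : j ≤ k / 2 := by
      rcases Finset.mem_union.1 (Finset.mem_coe.1 hj) with h | h <;>
        (rw [Finset.mem_Icc] at h; omega)
    have hjk' : j' ≤ k / 2 := by
      rcases Finset.mem_union.1 (Finset.mem_coe.1 hj') with h | h <;>
        (rw [Finset.mem_Icc] at h; omega)
    refine Finset.disjoint_left.2 fun i hi hi' => hne ?_
    rw [mem_M_iff_min B hjk] at hi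
    rw [mem_M_iff_min B hjk'] at hi'
    omega
  calc (∑ j ∈ J1, j * (B.M j).card) + (l - 1) * (∑ j ∈ J2, (B.M j).card)
      = (∑ j ∈ J1, ∑ i ∈ B.M j, g i) + ∑ j ∈ J2, ∑ i ∈ B.M j, g i := by
        rw [Finset.mul_sum, Finset.sum_congr rfl h1, Finset.sum_congr rfl h2]
    _ = ∑ j ∈ J1 ∪ J2, ∑ i ∈ B.M j, g i := (Finset.sum_union hdisj).symm
    _ = ∑ i ∈ (J1 ∪ J2).biUnion B.M, g i := (Finset.sum_biUnion hpair).symm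
    _ ≤ ∑ i : Fin n, g i :=
        Finset.sum_le_sum_of_subset (Finset.subset_univ _)

lemma key (hU : IsControlSet B.F U) {l : ℕ} (hl1 : 1 ≤ l) (hlk : l ≤ k) :
    (k - l) * n + (∑ i : Fin n, min (min (B.posCount i) (B.negCount i)) (l - 1))
      ≤ (2 * k - l) * U.card := by
  classical
  set W : Finset (Fin n) := Uᶜ with hW
  set m : Fin n → ℕ := fun j => min (B.posCount j) (B.negCount j) with hm
  set a : Fin n → ℕ := fun j => (W.filter fun i => j ∈ B.S i).card with ha
  -- choice of private in-neighbors
  have hPex : ∀ i : Fin n, ∃ j : Fin n,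
      i ∈ W → j ∈ B.S i ∧ ∀ i' ∈ W, j ∈ B.S i' → i' = i := by
    intro i
    by_cases hi : i ∈ W
    · obtain ⟨j, hj1, hj2⟩ := private_in B U hU (Finset.mem_compl.1 hi)
      exact ⟨j, fun _ => ⟨hj1, fun i' hiW' hj' => hj2 i' (Finset.mem_compl.1 hiW') hj'⟩⟩
    · exact ⟨i, fun h => absurd h hi⟩
  choose P hP using hPex
  set T : Finset (Fin n) := W.image P with hT
  have hinj : Set.InjOn P ↑W := by
    intro i1 h1 i2 h2 he
    have h1' := Finset.mem_coe.1 h1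
    have h2' := Finset.mem_coe.1 h2
    exact (hP i2 h2').2 i1 h1' (he ▸ (hP i1 h1').1)
  have hTcard : T.card = W.card := Finset.card_image_of_injOn hinj
  have haT : ∀ j ∈ T, a j = 1 := by
    intro j hj
    obtain ⟨i, hiW, rfl⟩ := Finset.mem_image.1 hj
    have hsingle : W.filter (fun i' => P i ∈ B.S i') = {i} := by
      ext i'
      simp only [Finset.mem_filter, Finset.mem_singleton]
      constructor
      · rintro ⟨hiW', hS⟩; exact (hP i hiW).2 i' hiW' hS
      · rintro rfl; exact ⟨hiW, (hP _ hiW).1⟩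
    rw [ha]; simp only []
    rw [hsingle, Finset.card_singleton]
  have hsum_a : ∑ j : Fin n, a j = k * W.card := by
    simp only [ha, Finset.card_filter]
    rw [Finset.sum_comm]
    have hrow : ∀ i ∈ W, (∑ j : Fin n, if j ∈ B.S i then 1 else 0) = k := by
      intro i _
      rw [← Finset.card_filter]
      rw [Finset.filter_univ_mem]
      exact B.card_S i
    rw [Finset.sum_congr rfl hrow, Finset.sum_const, smul_eq_mul, mul_comm]
  have hF3 : ∀ j : Fin n, a j + m j ≤ k := by
    intro j
    have hpn := pos_add_neg B j
    by_cases hne : (W.filter fun i => j ∈ B.S i).Nonempty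
    · obtain ⟨i0, hi0⟩ := hne
      rw [Finset.mem_filter] at hi0
      have hsub : W.filter (fun i => j ∈ B.S i) ⊆
          Finset.univ.filter fun i => j ∈ B.S i ∧ B.sign i j = B.sign i0 j := by
        intro i hi
        rw [Finset.mem_filter] at hi
        rw [Finset.mem_filter]
        exact ⟨Finset.mem_univ _, hi.2,
          sign_consistent B U hU (Finset.mem_compl.1 hi.1) (Finset.mem_compl.1 hi0.1)
            hi.2 hi0.2⟩
      have hale := Finset.card_le_card hsub
      cases hb : B.sign i0 j
      · -- all signs into W are false: a j ≤ negCount j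
        have h1 : a j ≤ B.negCount j := by
          rw [ha]; simp only []
          refine le_trans hale (le_of_eq ?_)
          rw [AndNegBN.negCount]
          congr 1
          ext i
          simp [hb]
        have h2 : m j ≤ B.posCount j := by rw [hm]; simp only []; omega
        omega
      · have h1 : a j ≤ B.posCount j := by
          rw [ha]; simp only []
          refine le_trans hale (le_of_eq ?_)
          rw [AndNegBN.posCount]
          congr 1
          ext i
          simp [hb]
        have h2 : m j ≤ B.negCount j := by rw [hm]; simp only []; omega
        omega
    · have h0 : a j = 0 := by
        rw [ha]; simp only []
        rw [Finset.not_nonempty_iff_eq_empty] at hne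
        rw [hne, Finset.card_empty]
      have h2 : m j ≤ B.posCount j := by rw [hm]; simp only []; omega
      omega
  -- cardinalities
  have hcardW : U.card + W.card = n := by
    have h := Finset.card_add_card_compl U
    rw [Fintype.card_fin] at h
    exact h
  have hTsub : T ⊆ Finset.univ := Finset.subset_univ T
  have hcard_sdiff : (Finset.univ \ T).card = U.card := by
    rw [Finset.card_sdiff_of_subset hTsub, hTcard]
    simp only [Finset.card_univ, Fintype.card_fin]
    omega
  set Sa := ∑ j ∈ Finset.univ \ T, a j with hSa
  set Sm := ∑ j ∈ Finset.univ \ T, m j with hSm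
  have hsplit : Sa + ∑ j ∈ T, a j = ∑ j : Fin n, a j := Finset.sum_sdiff hTsub
  have hTa : ∑ j ∈ T, a j = W.card := by
    rw [Finset.sum_congr rfl haT, Finset.sum_const, smul_eq_mul, mul_one, hTcard]
  have hfact1 : Sa + W.card = k * W.card := by rw [← hsum_a, ← hsplit, hTa]
  have hfact2 : Sa + Sm ≤ k * U.card := by
    have : Sa + Sm = ∑ j ∈ Finset.univ \ T, (a j + m j) := by
      rw [hSa, hSm, ← Finset.sum_add_distrib]
    rw [this]
    calc ∑ j ∈ Finset.univ \ T, (a j + m j)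
        ≤ ∑ _j ∈ Finset.univ \ T, k := Finset.sum_le_sum fun j _ => hF3 j
      _ = (Finset.univ \ T).card * k := by rw [Finset.sum_const, smul_eq_mul]
      _ = k * U.card := by rw [hcard_sdiff, mul_comm]
  have hfactX : (∑ i : Fin n, min (m i) (l - 1)) ≤ (l - 1) * W.card + Sm := by
    have hs : (∑ i ∈ Finset.univ \ T, min (m i) (l - 1))
        + ∑ i ∈ T, min (m i) (l - 1) = ∑ i : Fin n, min (m i) (l - 1) :=
      Finset.sum_sdiff hTsub
    have h1 : (∑ i ∈ Finset.univ \ T, min (m i) (l - 1)) ≤ Sm :=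
      Finset.sum_le_sum fun i _ => min_le_left _ _
    have h2 : (∑ i ∈ T, min (m i) (l - 1)) ≤ (l - 1) * W.card := by
      calc (∑ i ∈ T, min (m i) (l - 1)) ≤ ∑ _i ∈ T, (l - 1) :=
            Finset.sum_le_sum fun i _ => min_le_right _ _
        _ = T.card * (l - 1) := by rw [Finset.sum_const, smul_eq_mul]
        _ = (l - 1) * W.card := by rw [hTcard, mul_comm]
    omega
  -- final arithmetic
  obtain ⟨d, hd⟩ : ∃ d, k = l + d := ⟨k - l, by omega⟩
  obtain ⟨e, he⟩ : ∃ e, l = 1 + e := ⟨l - 1, by omega⟩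
  have hkl : k - l = d := by omega
  have h2kl : 2 * k - l = k + d := by omega
  have hl1e : l - 1 = e := by omega
  rw [hkl, h2kl, hl1e]
  rw [hl1e] at hfactX
  have hkw : k * W.card = W.card + e * W.card + d * W.card := by
    rw [hd, he]; ring
  have hku : k * U.card = U.card + e * U.card + d * U.card := by
    rw [hd, he]; ring
  have hdn : d * n = d * U.card + d * W.card := by
    have h := Nat.mul_add d U.card W.card
    rw [hcardW] at h
    exact h
  have hkdu : (k + d) * U.card = U.card + e * U.card + d * U.card + d * U.card := by
    rw [hd, he]; ring
  rw [hku] at hfact2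
  rw [hkw] at hfact1
  rw [hkdu, hdn]
  -- Sa = e * W.card + d * W.card from hfact1
  have hSaeq : Sa = e * W.card + d * W.card := by omega
  calc d * U.card + d * W.card + ∑ i : Fin n, min (m i) e
      ≤ d * U.card + d * W.card + (e * W.card + Sm) := by
        exact Nat.add_le_add_left hfactX _
    _ = d * U.card + (Sa + Sm) := by omega
    _ ≤ d * U.card + (U.card + e * U.card + d * U.card) := by
        exact Nat.add_le_add_left hfact2 _
    _ = U.card + e * U.card + d * U.card + d * U.card := by omega

end Aux

/-- For every `k`-`k`-AND-BN with negation (`k ≥ 2`) on `n` nodes and every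
control node set `U`, for every `l = 1, …, ⌊k/2⌋ + 1`,
`|U| ≥ ((k−l)/(2k−l))·n + (1/(2k−l))·Σ_{j=1}^{l−2} j·|M_j|
  + ((l−1)/(2k−l))·Σ_{j=l−1}^{⌊k/2⌋} |M_j|`
(hence `|U|` is at least the maximum over `l`; empty sums are 0). -/
theorem stmt16 (n k : ℕ) (hk : 2 ≤ k) (B : AndNegBN n k) (U : Finset (Fin n))
    (hU : IsControlSet B.F U) (l : ℕ) (hl1 : 1 ≤ l) (hl2 : l ≤ k / 2 + 1) :
    ((k : ℚ) - (l : ℚ)) / (2 * (k : ℚ) - (l : ℚ)) * n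
      + 1 / (2 * (k : ℚ) - (l : ℚ)) *
          (∑ j ∈ Finset.Icc 1 (l - 2), (j : ℚ) * ((B.M j).card : ℚ))
      + ((l : ℚ) - 1) / (2 * (k : ℚ) - (l : ℚ)) *
          (∑ j ∈ Finset.Icc (l - 1) (k / 2), ((B.M j).card : ℚ))
      ≤ U.card := by
  have hlk : l ≤ k := by omega
  have h2lk : l ≤ 2 * k := by omega
  have hnat : (k - l) * n
      + ((∑ j ∈ Finset.Icc 1 (l - 2), j * (B.M j).card)
        + (l - 1) * ∑ j ∈ Finset.Icc (l - 1) (k / 2), (B.M j).card)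
      ≤ (2 * k - l) * U.card := by
    have h1 := sum_M_le B hl1 hl2
    have h2 := key B U hU hl1 hlk
    omega
  have hD : (0 : ℚ) < 2 * (k : ℚ) - (l : ℚ) := by
    have hq1 : (l : ℚ) ≤ (k : ℚ) := by exact_mod_cast hlk
    have hq2 : (2 : ℚ) ≤ (k : ℚ) := by exact_mod_cast hk
    linarith
  rw [div_mul_eq_mul_div, div_mul_eq_mul_div, div_mul_eq_mul_div,
    ← add_div, ← add_div, div_le_iff₀ hD]
  have hcast : (((k - l) * n
      + ((∑ j ∈ Finset.Icc 1 (l - 2), j * (B.M j).card)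
        + (l - 1) * ∑ j ∈ Finset.Icc (l - 1) (k / 2), (B.M j).card) : ℕ) : ℚ)
      ≤ (((2 * k - l) * U.card : ℕ) : ℚ) := by exact_mod_cast hnat
  push_cast [Nat.cast_sub hlk, Nat.cast_sub h2lk, Nat.cast_sub hl1] at hcast
  linarith


end BN
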